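/- Let f, g ∈ R⟨X⟩ be compatible with a labelled quiver Q such that s(f) ∩ t(g) ≠ ∅. Then the product fg is compatible with Q and σ(fg) ⊇ {(u, w) ∈ s(g) × t(f) : ∃ v ∈ s(f) ∩ t(g), (u, v) ∈ σ(g) and (v, w) ∈ σ(f)}. If in addition f and g are uniformly compatible with Q and fg ≠ 0, then equality holds in this inclusion and fg is uniformly compatible with Q. -/

import Mathlib

open scoped BigOperators

/-- The free `R`-algebra `R⟨X⟩` on `X`, as the monoid algebra over `R`
of the free monoid `⟨X⟩` of words over `X`. -/
abbrev FreeAlg (R X : Type*) [CommRing R] := MonoidAlgebra R (FreeMonoid X)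

/-- A labelled quiver `Q = (V, E, X, s, t, l)`: a directed multigraph with vertex set `V`,
edge set `E`, source and target maps `s, t : E → V` and labelling `l : E → X`. -/
structure LabelledQuiver (V E X : Type*) where
  src : E → V
  tgt : E → V
  lab : E → X

/-- Paths in a labelled quiver `Q`; `LQPath Q u w` is the type of paths with source `u` and
target `w`.  `nil v` is the empty path at `v`; `cons e p` appends the edge `e` after `p`. -/
inductive LQPath {V E X : Type*} (Q : LabelledQuiver V E X) : V → V → Type _ where
  | nil (v : V) : LQPath Q v v
  | cons {u : V} (e : E) (p : LQPath Q u (Q.src e)) : LQPath Q u (Q.tgt e)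

namespace LQPath
variable {V E X : Type*} {Q : LabelledQuiver V E X}
/-- The label `l(p) = l(eₙ)⋯l(e₁) ∈ ⟨X⟩` of a path; the empty path has label `1`. -/
def label : {u w : V} → LQPath Q u w → FreeMonoid X
  | _, _, .nil _ => 1
  | _, _, .cons e p => FreeMonoid.of (Q.lab e) * p.label
end LQPath

namespace LabelledQuiver

variable {V E X : Type*} (Q : LabelledQuiver V E X)

/-- The set of signatures `σ(m) = {(s(p), t(p)) : p a path in Q with l(p) = m}`. -/
def sigmaM (m : FreeMonoid X) : Set (V × V) :=
  {vw | ∃ p : LQPath Q vw.1 vw.2, p.label = m}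

variable {R : Type*} [CommRing R]

/-- The set of signatures `σ(f) = ⋂_{m ∈ supp(f)} σ(m)` of a polynomial. -/
def sigmaP (f : FreeAlg R X) : Set (V × V) :=
  ⋂ m ∈ (f.coeff : FreeMonoid X →₀ R).support, Q.sigmaM m

/-- `f` is compatible with `Q` if `σ(f) ≠ ∅`. -/
def Compatible (f : FreeAlg R X) : Prop :=
  (Q.sigmaP f).Nonempty

/-- `f` is uniformly compatible with `Q` if it is compatible and all monomials in its
support have the same set of signatures. -/
def UniformlyCompatible (f : FreeAlg R X) : Prop :=
  Q.Compatible f ∧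
    ∀ m ∈ (f.coeff : FreeMonoid X →₀ R).support, ∀ m' ∈ (f.coeff : FreeMonoid X →₀ R).support,
      Q.sigmaM m = Q.sigmaM m'

/-- The set of sources `s(f)` of a polynomial: the projection of `σ(f)` to the first
component. -/
def srcSet (f : FreeAlg R X) : Set V := Prod.fst '' Q.sigmaP f

/-- The set of targets `t(f)` of a polynomial: the projection of `σ(f)` to the second
component. -/
def tgtSet (f : FreeAlg R X) : Set V := Prod.snd '' Q.sigmaP f

end LabelledQuiver

/-- The set `{(u, w) ∈ s(g) × t(f) : ∃ v ∈ s(f) ∩ t(g), (u, v) ∈ σ(g) ∧ (v, w) ∈ σ(f)}`. -/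
def prodSig {V E X R : Type*} [CommRing R] (Q : LabelledQuiver V E X)
    (f g : FreeAlg R X) : Set (V × V) :=
  {uw | uw.1 ∈ Q.srcSet g ∧ uw.2 ∈ Q.tgtSet f ∧
    ∃ v, v ∈ Q.srcSet f ∩ Q.tgtSet g ∧ (uw.1, v) ∈ Q.sigmaP g ∧ (v, uw.2) ∈ Q.sigmaP f}

section Aux
open scoped BigOperators

namespace LQPath
variable {V E X : Type*} {Q : LabelledQuiver V E X}

/-- Composition of paths. -/
def comp : {u v w : V} → LQPath Q v w → LQPath Q u v → LQPath Q u w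
  | _, _, _, .nil _, p => p
  | _, _, _, .cons e q, p => .cons e (q.comp p)

theorem label_comp : ∀ {u v w : V} (q : LQPath Q v w) (p : LQPath Q u v),
    (q.comp p).label = q.label * p.label
  | _, _, _, .nil _, p => by simp [comp, label]
  | _, _, _, .cons e q, p => by
      simp [comp, label, label_comp q p, mul_assoc]

theorem split : ∀ {u w : V} (r : LQPath Q u w) (a b : FreeMonoid X),
    r.label = a * b →
    ∃ (v : V) (q : LQPath Q v w) (p : LQPath Q u v), q.label = a ∧ p.label = b
  | u, _, .nil _, a, b, h => by
    have ha : a = 1 ∧ b = 1 := by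
      have h' : a.toList ++ b.toList = [] := by
        rw [← FreeMonoid.toList_mul, ← h]; simp [label]
      rcases List.append_eq_nil_iff.mp h' with ⟨ha, hb⟩
      exact ⟨FreeMonoid.toList.injective ha, FreeMonoid.toList.injective hb⟩
    exact ⟨u, .nil u, .nil u, by simp [label, ha.1], by simp [label, ha.2]⟩
  | u, _, .cons e r, a, b, h => by
    rcases ha : a.toList with _ | ⟨x, a'⟩
    · -- a = 1
      have ha1 : a = 1 := FreeMonoid.toList.injective ha
      exact ⟨_, .nil _, .cons e r, by simp [label, ha1], by
        rw [ha1, one_mul] at h; exact h⟩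
    · have hx : Q.lab e = x ∧ r.label = (FreeMonoid.ofList a') * b := by
        have h' : Q.lab e :: r.label.toList = (x :: a') ++ b.toList := by
          simpa [label, ha, FreeMonoid.toList_mul] using congrArg FreeMonoid.toList h
        simp only [List.cons_append, List.cons.injEq] at h'
        exact ⟨h'.1, FreeMonoid.toList.injective (by simpa using h'.2)⟩
      rcases split r (FreeMonoid.ofList a') b hx.2 with ⟨v, q, p, hq, hp⟩
      refine ⟨v, .cons e q, p, ?_, hp⟩
      apply FreeMonoid.toList.injective
      simp [label, hq, ha, hx.1]

end LQPath

namespace LabelledQuiver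
variable {V E X : Type*} (Q : LabelledQuiver V E X)

theorem sigmaM_mul (a b : FreeMonoid X) :
    Q.sigmaM (a * b) = {uw | ∃ v, (uw.1, v) ∈ Q.sigmaM b ∧ (v, uw.2) ∈ Q.sigmaM a} := by
  ext ⟨u, w⟩
  constructor
  · rintro ⟨r, hr⟩
    rcases r.split a b hr with ⟨v, q, p, hq, hp⟩
    exact ⟨v, ⟨p, hp⟩, ⟨q, hq⟩⟩
  · rintro ⟨v, ⟨p, hp⟩, ⟨q, hq⟩⟩
    exact ⟨q.comp p, by rw [LQPath.label_comp, hp, hq]⟩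

variable {R : Type*} [CommRing R]

theorem mem_sigmaP {f : FreeAlg R X} {uw : V × V} :
    uw ∈ Q.sigmaP f ↔ ∀ m ∈ (f.coeff : FreeMonoid X →₀ R).support, uw ∈ Q.sigmaM m := by
  simp [sigmaP]

theorem sigmaP_eq_of_uniform {f : FreeAlg R X} (hu : Q.UniformlyCompatible f)
    {m : FreeMonoid X} (hm : m ∈ (f.coeff : FreeMonoid X →₀ R).support) :
    Q.sigmaP f = Q.sigmaM m := by
  apply Set.Subset.antisymm
  · intro x hx; exact (Q.mem_sigmaP.mp hx) m hm
  · intro x hx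
    rw [Q.mem_sigmaP]
    intro m' hm'
    rw [hu.2 m' hm' m hm]; exact hx

end LabelledQuiver
end Aux

/-- If `f, g` are compatible with `Q` and `s(f) ∩ t(g) ≠ ∅`, then `f·g` is
compatible with `Q` and `σ(f·g)` contains
`{(u, w) ∈ s(g) × t(f) : ∃ v ∈ s(f) ∩ t(g), (u, v) ∈ σ(g) ∧ (v, w) ∈ σ(f)}`; if in addition
`f` and `g` are uniformly compatible and `f·g ≠ 0`, then equality holds and `f·g` is
uniformly compatible. -/
theorem mul_compatible {R V E X : Type*} [CommRing R] (Q : LabelledQuiver V E X)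
    (f g : FreeAlg R X) (hf : Q.Compatible f) (hg : Q.Compatible g)
    (hst : (Q.srcSet f ∩ Q.tgtSet g).Nonempty) :
    Q.Compatible (f * g) ∧ prodSig Q f g ⊆ Q.sigmaP (f * g) ∧
      (Q.UniformlyCompatible f → Q.UniformlyCompatible g → f * g ≠ 0 →
        Q.sigmaP (f * g) = prodSig Q f g ∧ Q.UniformlyCompatible (f * g)) := by
  classical
  set S : Set (V × V) :=
    {uw | ∃ v, (uw.1, v) ∈ Q.sigmaP g ∧ (v, uw.2) ∈ Q.sigmaP f} with hS
  have hsub : prodSig Q f g ⊆ Q.sigmaP (f * g) := by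
    rintro ⟨u, w⟩ ⟨-, -, v, -, hug, hvf⟩
    rw [Q.mem_sigmaP]
    intro m hm
    rcases Finset.mem_mul.mp (MonoidAlgebra.support_coeff_mul_subset f g hm) with ⟨a, ha, b, hb, rfl⟩
    rw [Q.sigmaM_mul]
    exact ⟨v, (Q.mem_sigmaP.mp hug) b hb, (Q.mem_sigmaP.mp hvf) a ha⟩
  have hSsub : S ⊆ prodSig Q f g := by
    rintro ⟨u, w⟩ ⟨v, hug, hvf⟩
    exact ⟨⟨(u, v), hug, rfl⟩, ⟨(v, w), hvf, rfl⟩, v,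
      ⟨⟨(v, w), hvf, rfl⟩, ⟨(u, v), hug, rfl⟩⟩, hug, hvf⟩
  have hne : (prodSig Q f g).Nonempty := by
    obtain ⟨v, hvs, hvt⟩ := hst
    obtain ⟨⟨v₁, w⟩, hσf, hv1⟩ := hvs
    obtain ⟨⟨u, v₂⟩, hσg, hv2⟩ := hvt
    simp only at hv1 hv2
    exact ⟨(u, w), hSsub ⟨v, by rw [← hv2]; exact hσg, by rw [← hv1]; exact hσf⟩⟩
  refine ⟨hne.mono hsub, hsub, ?_⟩
  intro huf hug hne0
  have hf0 : f ≠ 0 := fun h => hne0 (by simp [h])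
  have hg0 : g ≠ 0 := fun h => hne0 (by simp [h])
  have key : ∀ m ∈ ((f * g : FreeAlg R X).coeff : FreeMonoid X →₀ R).support, Q.sigmaM m = S := by
    intro m hm
    rcases Finset.mem_mul.mp (MonoidAlgebra.support_coeff_mul_subset f g hm) with ⟨a, ha, b, hb, rfl⟩
    rw [Q.sigmaM_mul, hS, ← Q.sigmaP_eq_of_uniform huf ha, ← Q.sigmaP_eq_of_uniform hug hb]
  have hunif : Q.UniformlyCompatible (f * g) :=
    ⟨hne.mono hsub, fun m hm m' hm' => by rw [key m hm, key m' hm']⟩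
  obtain ⟨m₀, hm₀⟩ := (Finsupp.support_nonempty_iff (f := (f * g).coeff)).mpr (by simpa using hne0)
  have hσ : Q.sigmaP (f * g) = S := by
    rw [Q.sigmaP_eq_of_uniform hunif hm₀, key m₀ hm₀]
  exact ⟨le_antisymm (hσ ▸ hSsub) hsub, hunif⟩
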